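/- Let θ be a real number with θ ≠ 0 and θ² < π²/2, and let k be a natural number with k ≥ 1. Then the series ∑_{n=k}^∞ l_n · θ^(2n) converges and its sum satisfies ∑_{n=k}^∞ l_n · θ^(2n) < 2 · l_k · θ^(2k). -/

import Mathlib

open Real

/-- `l n = |B_{2n}| * 2^(2n) / (2n * (2n+1)!)`. -/
noncomputable def l (n : ℕ) : ℝ :=
  |((bernoulli (2 * n) : ℚ) : ℝ)| * 2 ^ (2 * n) /
    ((2 * (n : ℝ)) * (Nat.factorial (2 * n + 1) : ℝ))

noncomputable def Zt (k : ℕ) : ℝ := ∑' n : ℕ, 1 / (n : ℝ) ^ (2 * k)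

lemma Zt_hasSum {k : ℕ} (hk : k ≠ 0) :
    HasSum (fun n : ℕ => 1 / (n : ℝ) ^ (2 * k)) (Zt k) := by
  have := hasSum_zeta_nat hk
  rwa [← this.tsum_eq] at this

lemma one_le_Zt {k : ℕ} (hk : k ≠ 0) : 1 ≤ Zt k := by
  have h := (Zt_hasSum hk).summable
  have h1 : (1 : ℝ) = 1 / ((1 : ℕ) : ℝ) ^ (2 * k) := by norm_num
  rw [h1]
  exact Summable.le_tsum h 1 (fun i _ => by positivity)

lemma Zt_anti {k m : ℕ} (hk : k ≠ 0) (hkm : k ≤ m) : Zt m ≤ Zt k := by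
  refine Summable.tsum_le_tsum (fun n => ?_) (Zt_hasSum (by omega)).summable (Zt_hasSum hk).summable
  rcases Nat.eq_zero_or_pos n with rfl | hn
  · norm_num [zero_pow (by omega : 2 * m ≠ 0), zero_pow (by omega : 2 * k ≠ 0)]
  · have h1 : (1 : ℝ) ≤ (n : ℝ) := by exact_mod_cast hn
    apply one_div_le_one_div_of_le (by positivity)
    exact pow_le_pow_right₀ h1 (by omega)

lemma l_eq {k : ℕ} (hk : 1 ≤ k) :
    l k = Zt k / ((k : ℝ) * (2 * k + 1) * Real.pi ^ (2 * k)) := by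
  have hZ := (hasSum_zeta_nat (k := k) (by omega)).tsum_eq
  rw [show (∑' n : ℕ, 1 / (n : ℝ) ^ (2 * k)) = Zt k from rfl] at hZ
  have hZpos : 0 < Zt k := lt_of_lt_of_le one_pos (one_le_Zt (by omega))
  have hfac : (0 : ℝ) < ((2 * k).factorial : ℝ) := by exact_mod_cast Nat.factorial_pos _
  have hpi : (0 : ℝ) < Real.pi ^ (2 * k) := by positivity
  have h2 : (0 : ℝ) < (2 : ℝ) ^ (2 * k - 1) := by positivity
  have hB : |((bernoulli (2 * k) : ℚ) : ℝ)| =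
      Zt k * ((2 * k).factorial : ℝ) / ((2 : ℝ) ^ (2 * k - 1) * Real.pi ^ (2 * k)) := by
    have hBval : ((bernoulli (2 * k) : ℚ) : ℝ) =
        (-1 : ℝ) ^ (k + 1) *
          (Zt k * ((2 * k).factorial : ℝ) / ((2 : ℝ) ^ (2 * k - 1) * Real.pi ^ (2 * k))) := by
      field_simp at hZ ⊢
      rcases Nat.even_or_odd (k + 1) with h | h
      · rw [h.neg_one_pow] at hZ ⊢; linarith [hZ]
      · rw [h.neg_one_pow] at hZ ⊢; linarith [hZ]
    rw [hBval, abs_mul, abs_pow, abs_neg, abs_one, one_pow, one_mul,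
      abs_of_pos (by positivity)]
  have hfacs : (((2 * k + 1).factorial : ℕ) : ℝ) = (2 * k + 1) * ((2 * k).factorial : ℝ) := by
    exact_mod_cast Nat.factorial_succ (2 * k)
  have hk0 : (0 : ℝ) < (k : ℝ) := by exact_mod_cast hk
  have h2pow : (2 : ℝ) ^ (2 * k) = 2 * (2 : ℝ) ^ (2 * k - 1) := by
    rw [← pow_succ']
    congr 1
    omega
  rw [l, hB, hfacs, h2pow]
  field_simp

/-- If `θ ≠ 0`, `θ² < π²/2` and `k ≥ 1`, then `∑_{n=k}^∞ l n * θ^(2n)` converges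
and is less than `2 * l k * θ^(2k)`. -/
theorem stmt4 (θ : ℝ) (hθ : θ ≠ 0) (hθ2 : θ ^ 2 < Real.pi ^ 2 / 2)
    (k : ℕ) (hk : 1 ≤ k) :
    Summable (fun n : ℕ => l (n + k) * θ ^ (2 * (n + k))) ∧
    (∑' n : ℕ, l (n + k) * θ ^ (2 * (n + k))) < 2 * l k * θ ^ (2 * k) := by
  set r : ℝ := θ ^ 2 / Real.pi ^ 2 with hr_def
  have hpi : (0 : ℝ) < Real.pi := Real.pi_pos
  have hr0 : 0 < r := by positivity
  have hr2 : r < 1 / 2 := by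
    rw [hr_def, div_lt_div_iff₀ (by positivity) two_pos]
    nlinarith
  have hterm : ∀ m : ℕ, 1 ≤ m → l m * θ ^ (2 * m) = Zt m / ((m : ℝ) * (2 * m + 1)) * r ^ m := by
    intro m hm
    have hpim : (Real.pi : ℝ) ^ (2 * m) ≠ 0 := by positivity
    have hmr : θ ^ (2 * m) = r ^ m * Real.pi ^ (2 * m) := by
      rw [hr_def, div_pow, ← pow_mul, ← pow_mul, div_mul_cancel₀ _ hpim]
    have hm0 : (0 : ℝ) < (m : ℝ) := by exact_mod_cast hm
    rw [l_eq hm, hmr]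
    field_simp
  have hcmp : ∀ n : ℕ, l (n + k) * θ ^ (2 * (n + k)) ≤ (l k * θ ^ (2 * k)) * r ^ n := by
    intro n
    rw [hterm (n + k) (by omega), hterm k hk]
    have h1 : Zt (n + k) ≤ Zt k := Zt_anti (by omega) (by omega)
    have hkc : (1 : ℝ) ≤ (k : ℝ) := by exact_mod_cast hk
    have hnc : (0 : ℝ) ≤ (n : ℝ) := Nat.cast_nonneg n
    have h2 : ((k : ℝ) * (2 * k + 1)) ≤ (((n + k : ℕ) : ℝ) * (2 * ((n + k : ℕ) : ℝ) + 1)) := by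
      push_cast
      nlinarith
    have hkpos : (0 : ℝ) < (k : ℝ) * (2 * k + 1) := by nlinarith
    have hZnk : 0 ≤ Zt (n + k) := le_trans zero_le_one (one_le_Zt (by omega))
    calc Zt (n + k) / (((n + k : ℕ) : ℝ) * (2 * ((n + k : ℕ) : ℝ) + 1)) * r ^ (n + k)
        ≤ Zt k / ((k : ℝ) * (2 * k + 1)) * r ^ (n + k) := by
          gcongr
          exact le_trans zero_le_one (one_le_Zt (by omega))
      _ = Zt k / ((k : ℝ) * (2 * k + 1)) * r ^ k * r ^ n := by rw [pow_add]; ring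
  have hnn : ∀ n : ℕ, 0 ≤ l (n + k) * θ ^ (2 * (n + k)) := by
    intro n
    have hl : 0 ≤ l (n + k) := by
      rw [l]
      positivity
    have hθp : 0 ≤ θ ^ (2 * (n + k)) := by rw [pow_mul]; positivity
    exact mul_nonneg hl hθp
  have hgeo : Summable (fun n : ℕ => (l k * θ ^ (2 * k)) * r ^ n) :=
    (summable_geometric_of_lt_one hr0.le (by linarith)).mul_left _
  have hsum : Summable (fun n : ℕ => l (n + k) * θ ^ (2 * (n + k))) :=
    Summable.of_nonneg_of_le hnn hcmp hgeo
  refine ⟨hsum, ?_⟩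
  have hlk : 0 < l k * θ ^ (2 * k) := by
    rw [hterm k hk]
    have hkc : (1 : ℝ) ≤ (k : ℝ) := by exact_mod_cast hk
    have hZ : 0 < Zt k := lt_of_lt_of_le one_pos (one_le_Zt (by omega))
    have : (0 : ℝ) < (k : ℝ) * (2 * k + 1) := by nlinarith
    positivity
  have hle : (∑' n : ℕ, l (n + k) * θ ^ (2 * (n + k))) ≤
      (l k * θ ^ (2 * k)) * (1 - r)⁻¹ := by
    have := Summable.tsum_le_tsum hcmp hsum hgeo
    rwa [tsum_mul_left, tsum_geometric_of_lt_one hr0.le (by linarith)] at this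
  have hlt : (l k * θ ^ (2 * k)) * (1 - r)⁻¹ < 2 * l k * θ ^ (2 * k) := by
    have h1r : (1 - r)⁻¹ < 2 := by
      rw [inv_lt_comm₀ (by linarith) two_pos]
      linarith
    calc (l k * θ ^ (2 * k)) * (1 - r)⁻¹ < (l k * θ ^ (2 * k)) * 2 :=
          mul_lt_mul_of_pos_left h1r hlk
      _ = 2 * l k * θ ^ (2 * k) := by ring
  linarith
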